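/- Local confluence of the substitution subcalculus: if a well-formed suspension expression s rewrites in one step by a reading or merging rule to u, and in one step to v, then there exists an expression t such that u rewrites to t and v rewrites to t by finitely many reading and merging steps. -/

import Mathlib

/- Terms of the suspension calculus: constants, de Bruijn indices `#i`,
applications, abstractions, and suspensions `[t, ol, nl, e]`. -/
mutual
inductive Tm : Type where
  | const : Nat → Tm
  | idx : Nat → Tm
  | app : Tm → Tm → Tm
  | lam : Tm → Tm
  | susp : Tm → Nat → Nat → Env → Tm
/-- Environments: `nil`, cons cells `(t,n)::e`, and merges `{e1, nl1, ol2, e2}`. -/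
inductive Env : Type where
  | nil : Env
  | econs : Tm → Nat → Env → Env
  | merge : Env → Nat → Nat → Env → Env
end

/-- Length of an environment. -/
def Env.len : Env → Nat
  | .nil => 0
  | .econs _ _ e => 1 + Env.len e
  | .merge e1 nl1 _ e2 => Env.len e1 + (Env.len e2 - nl1)

/-- Level of an environment. -/
def Env.lev : Env → Nat
  | .nil => 0
  | .econs _ l _ => l
  | .merge _ nl1 ol2 e2 => Env.lev e2 + (nl1 - ol2)

/- Well-formedness of suspension expressions. -/
mutual
inductive WfTm : Tm → Prop where
  | const : ∀ c, WfTm (.const c)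
  | idx : ∀ i, 1 ≤ i → WfTm (.idx i)
  | app : ∀ {t1 t2}, WfTm t1 → WfTm t2 → WfTm (.app t1 t2)
  | lam : ∀ {t}, WfTm t → WfTm (.lam t)
  | susp : ∀ {t e} (ol nl : Nat), WfTm t → WfEnv e → Env.len e = ol →
      Env.lev e ≤ nl → WfTm (.susp t ol nl e)
inductive WfEnv : Env → Prop where
  | nil : WfEnv .nil
  | econs : ∀ {t e} (l : Nat), WfTm t → WfEnv e → Env.lev e ≤ l → WfEnv (.econs t l e)
  | merge : ∀ {e1 e2} (nl1 ol2 : Nat), WfEnv e1 → WfEnv e2 → Env.lev e1 ≤ nl1 →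
      Env.len e2 = ol2 → WfEnv (.merge e1 nl1 ol2 e2)
end

/- One-step rewriting by the reading rules (r1)-(r6) and merging rules
(m1)-(m6), applied at any subexpression. -/
mutual
inductive SR : Tm → Tm → Prop where
  | r1 : ∀ c ol nl e, SR (.susp (.const c) ol nl e) (.const c)
  | r2 : ∀ i nl, 1 ≤ i → SR (.susp (.idx i) 0 nl .nil) (.idx (i + nl))
  | r3 : ∀ ol nl t l e, SR (.susp (.idx 1) ol nl (.econs t l e)) (.susp t 0 (nl - l) .nil)
  | r4 : ∀ i ol nl t l e, 1 < i →
      SR (.susp (.idx i) ol nl (.econs t l e)) (.susp (.idx (i - 1)) (ol - 1) nl e)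
  | r5 : ∀ t1 t2 ol nl e,
      SR (.susp (.app t1 t2) ol nl e) (.app (.susp t1 ol nl e) (.susp t2 ol nl e))
  | r6 : ∀ t ol nl e,
      SR (.susp (.lam t) ol nl e)
         (.lam (.susp t (ol + 1) (nl + 1) (.econs (.idx 1) (nl + 1) e)))
  | m1 : ∀ t ol1 nl1 e1 ol2 nl2 e2,
      SR (.susp (.susp t ol1 nl1 e1) ol2 nl2 e2)
         (.susp t (ol1 + (ol2 - nl1)) (nl2 + (nl1 - ol2)) (.merge e1 nl1 ol2 e2))
  | appL : ∀ {t1 t1'} (t2 : Tm), SR t1 t1' → SR (.app t1 t2) (.app t1' t2)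
  | appR : ∀ (t1 : Tm) {t2 t2'}, SR t2 t2' → SR (.app t1 t2) (.app t1 t2')
  | lamC : ∀ {t t'}, SR t t' → SR (.lam t) (.lam t')
  | suspT : ∀ {t t'} ol nl e, SR t t' → SR (.susp t ol nl e) (.susp t' ol nl e)
  | suspE : ∀ t ol nl {e e'}, SRE e e' → SR (.susp t ol nl e) (.susp t ol nl e')
inductive SRE : Env → Env → Prop where
  | m2 : ∀ e1 nl1, SRE (.merge e1 nl1 0 .nil) e1
  | m3 : ∀ ol2 e2, SRE (.merge .nil 0 ol2 e2) e2
  | m4 : ∀ nl1 ol2 t l e2, 1 ≤ nl1 →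
      SRE (.merge .nil nl1 ol2 (.econs t l e2)) (.merge .nil (nl1 - 1) (ol2 - 1) e2)
  | m5 : ∀ t n e1 nl1 ol2 s l e2, n < nl1 →
      SRE (.merge (.econs t n e1) nl1 ol2 (.econs s l e2))
          (.merge (.econs t n e1) (nl1 - 1) (ol2 - 1) e2)
  | m6 : ∀ t n e1 ol2 s l e2,
      SRE (.merge (.econs t n e1) n ol2 (.econs s l e2))
          (.econs (.susp t ol2 l (.econs s l e2)) (l + (n - ol2))
                  (.merge e1 n ol2 (.econs s l e2)))
  | consT : ∀ {t t'} l e, SR t t' → SRE (.econs t l e) (.econs t' l e)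
  | consE : ∀ t l {e e'}, SRE e e' → SRE (.econs t l e) (.econs t l e')
  | mergeL : ∀ {e1 e1'} nl1 ol2 e2, SRE e1 e1' →
      SRE (.merge e1 nl1 ol2 e2) (.merge e1' nl1 ol2 e2)
  | mergeR : ∀ e1 nl1 ol2 {e2 e2'}, SRE e2 e2' →
      SRE (.merge e1 nl1 ol2 e2) (.merge e1 nl1 ol2 e2')
end
/-! ## Auxiliary development: a normalization function for the rm-calculus -/

/-- Size of a term (termination measure). -/
def S : Tm → Nat
  | .const _ => 1
  | .idx _ => 1
  | .app a b => S a + S b + 1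
  | .lam a => S a + 2
  | .susp _ _ _ _ => 1

theorem S_pos (t : Tm) : 0 < S t := by cases t <;> simp [S]

/-- Weight of a list environment. -/
def W : List (Tm × Nat) → Nat
  | [] => 0
  | (t, _) :: L => S t + W L

/-- Substitution of a (pure) term along a list environment. -/
def sub : Tm → Nat → List (Tm × Nat) → Tm
  | .const c, _, _ => .const c
  | .idx i, nl, [] => .idx (i + nl)
  | .idx i, nl, (t, l) :: L => if i = 1 then sub t (nl - l) [] else sub (.idx (i - 1)) nl L
  | .app a b, nl, L => .app (sub a nl L) (sub b nl L)
  | .lam a, nl, L => .lam (sub a (nl + 1) ((.idx 1, nl + 1) :: L))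
  | .susp t o n e, _, _ => .susp t o n e
termination_by t _ L => S t + W L
decreasing_by
  all_goals simp [S, W]
  all_goals first
    | omega
    | (have := S_pos t; omega)

@[simp] theorem sub_const : sub (.const c) nl L = .const c := by simp [sub]
@[simp] theorem sub_idx_nil : sub (.idx i) nl [] = .idx (i + nl) := by simp [sub]
theorem sub_idx_one : sub (.idx 1) nl ((t, l) :: L) = sub t (nl - l) [] := by simp [sub]
theorem sub_idx_succ (h : i ≠ 1) :
    sub (.idx i) nl ((t, l) :: L) = sub (.idx (i - 1)) nl L := by
  rw [sub]; simp [h]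
@[simp] theorem sub_app : sub (.app a b) nl L = .app (sub a nl L) (sub b nl L) := by
  rw [sub]
@[simp] theorem sub_lam : sub (.lam a) nl L = .lam (sub a (nl + 1) ((.idx 1, nl + 1) :: L)) := by
  rw [sub]

/-- Merging of two list environments. -/
def mergeL : List (Tm × Nat) → Nat → Nat → List (Tm × Nat) → List (Tm × Nat)
  | l1, _, _, [] => l1
  | [], 0, _, l2 => l2
  | [], n + 1, o, _ :: l2 => mergeL [] n (o - 1) l2
  | (t, n) :: l1, nl1, o, (s, l) :: l2 =>
      if n = nl1 then (sub t l ((s, l) :: l2), l + (n - o)) :: mergeL l1 nl1 o ((s, l) :: l2)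
      else mergeL ((t, n) :: l1) (nl1 - 1) (o - 1) l2
termination_by l1 _ _ l2 => l1.length + l2.length
decreasing_by all_goals (simp; try omega)

@[simp] theorem mergeL_nil2 : mergeL l1 n o [] = l1 := by
  cases l1 with
  | nil => cases n <;> rw [mergeL]
  | cons a l => rw [mergeL]
theorem mergeL_zero : mergeL [] 0 o ((s, l) :: l2) = (s, l) :: l2 := by rw [mergeL] <;> simp
theorem mergeL_m4 : mergeL [] (n + 1) o ((s, l) :: l2) = mergeL [] n (o - 1) l2 := by
  rw [mergeL] <;> simp
theorem mergeL_m6 :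
    mergeL ((t, n) :: l1) n o ((s, l) :: l2)
      = (sub t l ((s, l) :: l2), l + (n - o)) :: mergeL l1 n o ((s, l) :: l2) := by
  rw [mergeL] <;> simp
theorem mergeL_m5 (h : n ≠ nl1) :
    mergeL ((t, n) :: l1) nl1 o ((s, l) :: l2) = mergeL ((t, n) :: l1) (nl1 - 1) (o - 1) l2 := by
  rw [mergeL] <;> simp [h]

/-- Level of a list environment. -/
def levL : List (Tm × Nat) → Nat
  | [] => 0
  | (_, l) :: _ => l

/-- Ordered (well-formed) list environments. -/
def OrdL : List (Tm × Nat) → Prop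
  | [] => True
  | (_, l) :: L => levL L ≤ l ∧ OrdL L

/-- Good (pure, well-formed) terms. -/
def Good : Tm → Prop
  | .const _ => True
  | .idx i => 1 ≤ i
  | .app a b => Good a ∧ Good b
  | .lam a => Good a
  | .susp _ _ _ _ => False

def GoodL (L : List (Tm × Nat)) : Prop := ∀ x ∈ L, Good x.1

theorem mergeL_step (h : levL l1 < n) :
    mergeL l1 n o ((s, l) :: l2) = mergeL l1 (n - 1) (o - 1) l2 := by
  cases l1 with
  | nil =>
    cases n with
    | zero => omega
    | succ n => rw [mergeL_m4]; rfl
  | cons a l =>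
    obtain ⟨t, m⟩ := a
    rw [mergeL_m5]
    simp [levL] at h; omega
@[simp] theorem GoodL_nil : GoodL [] := by simp [GoodL]
@[simp] theorem GoodL_cons : GoodL ((t, l) :: L) ↔ Good t ∧ GoodL L := by
  simp [GoodL]

theorem subGood : ∀ a nl L, Good a → GoodL L → Good (sub a nl L) := by
  intro a nl L
  induction a, nl, L using sub.induct with
  | case1 => intros; simp [Good]
  | case2 i nl => intro h _; simp [Good] at *; omega
  | case3 nl t l L ih =>
    intro _ hL
    rw [sub_idx_one]
    exact ih (GoodL_cons.mp hL).1 GoodL_nil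
  | case4 i nl t l L h ih =>
    intro hi hL
    rw [sub_idx_succ h]
    refine ih ?_ (GoodL_cons.mp hL).2
    simp [Good] at *; omega
  | case5 a b nl L iha ihb =>
    intro hg hL
    rw [sub_app]
    exact ⟨iha hg.1 hL, ihb hg.2 hL⟩
  | case6 a nl L ih =>
    intro hg hL
    rw [sub_lam]
    exact ih hg (GoodL_cons.mpr ⟨by simp [Good], hL⟩)
  | case7 => intro hg _; exact absurd hg (by simp [Good])

theorem mergeL_good : ∀ l1 n o l2, GoodL l1 → GoodL l2 → GoodL (mergeL l1 n o l2) := by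
  intro l1 n o l2
  induction l1, n, o, l2 using mergeL.induct with
  | case1 => intros; simpa
  | case2 => intros; rename_i l2 _ _ _; cases l2 with
    | nil => simpa
    | cons a l2 => obtain ⟨s, l⟩ := a; rw [mergeL_zero]; assumption
  | case3 n o hd l2 ih =>
    obtain ⟨s, l⟩ := hd
    intro _ h2
    rw [mergeL_m4]
    exact ih GoodL_nil (GoodL_cons.mp h2).2
  | case4 t l1 nl1 o s l l2 ih =>
    intro h1 h2
    rw [mergeL_m6]
    refine GoodL_cons.mpr ⟨?_, ih (GoodL_cons.mp h1).2 h2⟩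
    exact subGood _ _ _ (GoodL_cons.mp h1).1 h2
  | case5 t n l1 nl1 o s l l2 h ih =>
    intro h1 h2
    rw [mergeL_m5 h]
    exact ih h1 (GoodL_cons.mp h2).2

theorem mergeL_len : ∀ l1 n o l2, OrdL l1 → levL l1 ≤ n →
    (mergeL l1 n o l2).length = l1.length + (l2.length - n) := by
  intro l1 n o l2
  induction l1, n, o, l2 using mergeL.induct with
  | case1 => intros; simp
  | case2 => intros; rename_i l2 _ _ _; cases l2 with
    | nil => simp
    | cons a l2 => obtain ⟨s, l⟩ := a; rw [mergeL_zero]; simp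
  | case3 n o hd l2 ih =>
    obtain ⟨s, l⟩ := hd
    intro _ _
    rw [mergeL_m4]
    have := ih (by trivial) (by simp [levL])
    simp [levL] at *; omega
  | case4 t l1 nl1 o s l l2 ih =>
    intro h1 hn
    rw [mergeL_m6]
    have := ih h1.2 (le_trans h1.1 hn)
    simp at *; omega
  | case5 t n l1 nl1 o s l l2 h ih =>
    intro h1 hn
    rw [mergeL_m5 h]
    simp [levL] at hn
    have := ih h1 (by simp [levL]; omega)
    simp at *; omega

theorem mergeL_lev : ∀ l1 n o l2, OrdL l1 → OrdL l2 → levL l1 ≤ n → l2.length = o →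
    levL (mergeL l1 n o l2) ≤ levL l2 + (n - o) := by
  intro l1 n o l2
  induction l1, n, o, l2 using mergeL.induct with
  | case1 =>
    intro h1 _ hn hlen
    simp only [mergeL_nil2]
    simp [levL] at *
    omega
  | case2 => intros; rename_i l2 _ _ _ _ _; cases l2 with
    | nil => simp [levL]
    | cons a l2 => obtain ⟨s, l⟩ := a; rw [mergeL_zero]; simp
  | case3 n o hd l2 ih =>
    obtain ⟨s, l⟩ := hd
    intro _ h2 _ hlen
    rw [mergeL_m4]
    simp at hlen
    have h21 := h2.1
    have := ih (by trivial) h2.2 (by simp [levL]) (by omega)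
    simp [levL] at *; omega
  | case4 t l1 nl1 o s l l2 ih =>
    intro h1 h2 hn hlen
    rw [mergeL_m6]
    simp [levL]
  | case5 t n l1 nl1 o s l l2 h ih =>
    intro h1 h2 hn hlen
    rw [mergeL_m5 h]
    simp [levL] at hn
    simp at hlen
    have h21 := h2.1
    have := ih h1 h2.2 (by simp [levL]; omega) (by omega)
    simp [levL] at *
    omega

theorem mergeL_ord : ∀ l1 n o l2, OrdL l1 → OrdL l2 → levL l1 ≤ n → l2.length = o →
    OrdL (mergeL l1 n o l2) := by
  intro l1 n o l2
  induction l1, n, o, l2 using mergeL.induct with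
  | case1 => intros; simpa
  | case2 => intros; rename_i l2 _ _ _ _ _; cases l2 with
    | nil => simpa
    | cons a l2 => obtain ⟨s, l⟩ := a; rw [mergeL_zero]; assumption
  | case3 n o hd l2 ih =>
    obtain ⟨s, l⟩ := hd
    intro _ h2 _ hlen
    rw [mergeL_m4]
    exact ih (by trivial) h2.2 (by simp [levL]) (by simp at hlen; omega)
  | case4 t l1 nl1 o s l l2 ih =>
    intro h1 h2 hn hlen
    rw [mergeL_m6]
    refine ⟨?_, ih h1.2 h2 (le_trans h1.1 hn) hlen⟩
    have := mergeL_lev l1 nl1 o ((s, l) :: l2) h1.2 h2 (le_trans h1.1 hn) hlen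
    simp [levL] at *
    omega
  | case5 t n l1 nl1 o s l l2 h ih =>
    intro h1 h2 hn hlen
    rw [mergeL_m5 h]
    simp [levL] at hn
    exact ih h1 h2.2 (by simp [levL]; omega) (by simp at hlen; omega)
/-- Structural induction for terms (ignoring environments). -/
theorem tmInd (motive : Tm → Prop) (hc : ∀ c, motive (.const c)) (hi : ∀ i, motive (.idx i))
    (ha : ∀ a b, motive a → motive b → motive (.app a b))
    (hl : ∀ a, motive a → motive (.lam a))
    (hs : ∀ t o n e, motive (.susp t o n e)) : ∀ t, motive t
  | .const c => hc c
  | .idx i => hi i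
  | .app a b => ha a b (tmInd motive hc hi ha hl hs a) (tmInd motive hc hi ha hl hs b)
  | .lam a => hl a (tmInd motive hc hi ha hl hs a)
  | .susp t o n e => hs t o n e

/-- Trivial environments generated by rule (r6). -/
def trivL (m : Nat) : Nat → List (Tm × Nat)
  | 0 => []
  | p + 1 => (.idx 1, m + p + 1) :: trivL m p

theorem sub_triv_lookup : ∀ p i, 1 ≤ i → i ≤ p → ∀ Y m (E : List (Tm × Nat)), m + p ≤ Y →
    sub (.idx i) Y (trivL m p ++ E) = .idx (i + (Y - (m + p))) := by
  intro p
  induction p with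
  | zero => omega
  | succ p ih =>
    intro i h1 hp Y m E hY
    by_cases hi : i = 1
    · subst hi
      rw [trivL, List.cons_append, sub_idx_one, sub_idx_nil]
      congr 1
    · rw [trivL, List.cons_append, sub_idx_succ hi,
        ih (i - 1) (by omega) (by omega) Y m E (by omega)]
      congr 1
      omega

theorem sub_triv_skip : ∀ p i Y m (E : List (Tm × Nat)), p < i →
    sub (.idx i) Y (trivL m p ++ E) = sub (.idx (i - p)) Y E := by
  intro p
  induction p with
  | zero => intro i Y m E _; simp [trivL]
  | succ p ih =>
    intro i Y m E hp
    rw [trivL, List.cons_append, sub_idx_succ (by omega), ih (i - 1) Y m E (by omega)]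
    have : i - 1 - p = i - (p + 1) := by omega
    rw [this]

theorem Hlem : ∀ t, Good t → ∀ q M p k, p ≤ M →
    sub (sub t (M + q) (trivL M q)) (k + p + q) (trivL k (p + q))
      = sub t (M + k + q) (trivL (M + k) q) := by
  intro t
  induction t using tmInd with
  | hc c => intros; simp
  | hi i =>
    intro hg q M p k hpM
    simp only [Good] at hg
    by_cases hq : i ≤ q
    · have l1 := sub_triv_lookup q i hg hq (M + q) M [] (by omega)
      have l2 := sub_triv_lookup (p + q) i hg (by omega) (k + p + q) k [] (by omega)
      have l3 := sub_triv_lookup q i hg hq (M + k + q) (M + k) [] (by omega)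
      simp only [List.append_nil] at l1 l2 l3
      have c1 : i + (M + q - (M + q)) = i := by omega
      have c2 : i + (k + p + q - (k + (p + q))) = i := by omega
      have c3 : i + (M + k + q - (M + k + q)) = i := by omega
      rw [c1] at l1
      rw [c2] at l2
      rw [c3] at l3
      rw [l1, l2, l3]
    · have s1 := sub_triv_skip q i (M + q) M [] (by omega)
      have s3 := sub_triv_skip q i (M + k + q) (M + k) [] (by omega)
      simp only [List.append_nil] at s1 s3
      rw [s1, s3, sub_idx_nil, sub_idx_nil]
      have s2 := sub_triv_skip (p + q) (i - q + (M + q)) (k + p + q) k [] (by omega)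
      simp only [List.append_nil] at s2
      rw [s2, sub_idx_nil]
      congr 1
      omega
  | ha a b iha ihb =>
    intro hg q M p k hpM
    simp only [Good] at hg
    rw [sub_app, sub_app, sub_app, iha hg.1 q M p k hpM, ihb hg.2 q M p k hpM]
  | hl a ih =>
    intro hg q M p k hpM
    rw [sub_lam, sub_lam, sub_lam]
    have a2 : k + p + q + 1 = k + (p + q) + 1 := by omega
    rw [a2]
    have h' := ih hg (q + 1) M p k hpM
    have e1 : trivL M (q + 1) = (Tm.idx 1, M + q + 1) :: trivL M q := rfl
    have e2 : trivL k (p + (q + 1)) = (Tm.idx 1, k + (p + q) + 1) :: trivL k (p + q) := rfl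
    have e3 : trivL (M + k) (q + 1) = (Tm.idx 1, M + k + q + 1) :: trivL (M + k) q := rfl
    rw [e1, e2, e3] at h'
    have b1 : M + (q + 1) = M + q + 1 := by omega
    have b2 : k + p + (q + 1) = k + (p + q) + 1 := by omega
    have b3 : M + k + (q + 1) = M + k + q + 1 := by omega
    rw [b1, b2, b3] at h'
    exact congrArg Tm.lam h'
  | hs t o n e => intro hg; exact absurd hg (by simp [Good])

theorem I3lem : ∀ (E : List (Tm × Nat)) j nl p k, 1 ≤ j → GoodL E → OrdL E → levL E ≤ nl →
    sub (sub (.idx j) (nl + p) E) (k + p) (trivL k p) = sub (.idx j) (nl + k + p) E := by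
  intro E
  induction E with
  | nil =>
    intro j nl p k hj _ _ _
    rw [sub_idx_nil, sub_idx_nil]
    have s := sub_triv_skip p (j + (nl + p)) (k + p) k [] (by omega)
    simp only [List.append_nil] at s
    rw [s, sub_idx_nil]
    congr 1
    omega
  | cons hd E' ih =>
    obtain ⟨t, l⟩ := hd
    intro j nl p k hj hg ho hlev
    simp only [levL] at hlev
    by_cases hjo : j = 1
    · subst hjo
      rw [sub_idx_one, sub_idx_one]
      have hH := Hlem t (GoodL_cons.mp hg).1 0 (nl + p - l) p k (by omega)
      simp only [trivL, Nat.add_zero] at hH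
      rw [hH]
      congr 1
      omega
    · rw [sub_idx_succ hjo, sub_idx_succ hjo]
      exact ih (j - 1) nl p k (by omega) (GoodL_cons.mp hg).2 ho.2 (le_trans ho.1 hlev)

/-- The key "shift" lemma. -/
theorem Glem : ∀ t, Good t → ∀ (E : List (Tm × Nat)), GoodL E → OrdL E →
    ∀ nl p k, levL E ≤ nl →
    sub (sub t (nl + p) (trivL nl p ++ E)) (k + p) (trivL k p)
      = sub t (nl + k + p) (trivL (nl + k) p ++ E) := by
  intro t
  induction t using tmInd with
  | hc c => intros; simp
  | hi i =>
    intro hg E hgE hoE nl p k hlev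
    simp only [Good] at hg
    by_cases hip : i ≤ p
    · have l1 := sub_triv_lookup p i hg hip (nl + p) nl E (by omega)
      have l2 := sub_triv_lookup p i hg hip (k + p) k [] (by omega)
      have l3 := sub_triv_lookup p i hg hip (nl + k + p) (nl + k) E (by omega)
      simp only [List.append_nil] at l2
      have c1 : i + (nl + p - (nl + p)) = i := by omega
      have c2 : i + (k + p - (k + p)) = i := by omega
      have c3 : i + (nl + k + p - (nl + k + p)) = i := by omega
      rw [c1] at l1
      rw [c2] at l2
      rw [c3] at l3
      rw [l1, l2, l3]
    · rw [sub_triv_skip p i (nl + p) nl E (by omega),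
        sub_triv_skip p i (nl + k + p) (nl + k) E (by omega)]
      exact I3lem E (i - p) nl p k (by omega) hgE hoE hlev
  | ha a b iha ihb =>
    intro hg E hgE hoE nl p k hlev
    simp only [Good] at hg
    rw [sub_app, sub_app, sub_app, iha hg.1 E hgE hoE nl p k hlev,
      ihb hg.2 E hgE hoE nl p k hlev]
  | hl a ih =>
    intro hg E hgE hoE nl p k hlev
    rw [sub_lam, sub_lam, sub_lam]
    have h' := ih hg E hgE hoE nl (p + 1) k hlev
    have e1 : trivL nl (p + 1) ++ E = (Tm.idx 1, nl + p + 1) :: (trivL nl p ++ E) := rfl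
    have e2 : trivL k (p + 1) = (Tm.idx 1, k + p + 1) :: trivL k p := rfl
    have e3 : trivL (nl + k) (p + 1) ++ E
        = (Tm.idx 1, nl + k + p + 1) :: (trivL (nl + k) p ++ E) := rfl
    rw [e1, e2, e3] at h'
    have b1 : nl + (p + 1) = nl + p + 1 := by omega
    have b2 : k + (p + 1) = k + p + 1 := by omega
    have b3 : nl + k + (p + 1) = nl + k + p + 1 := by omega
    rw [b1, b2, b3] at h'
    exact congrArg Tm.lam h'
  | hs t o n e => intro hg; exact absurd hg (by simp [Good])

theorem shift0 (t : Tm) (E : List (Tm × Nat)) (nl k : Nat) (hg : Good t) (hgE : GoodL E)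
    (hoE : OrdL E) (hlev : levL E ≤ nl) : sub (sub t nl E) k [] = sub t (nl + k) E := by
  have := Glem t hg E hgE hoE nl 0 k hlev
  simpa [trivL] using this
theorem Dlem : ∀ nl1 o (E2 : List (Tm × Nat)) i nl2, 1 ≤ i → E2.length = o →
    sub (.idx (i + nl1)) nl2 E2 = sub (.idx i) (nl2 + (nl1 - o)) (mergeL [] nl1 o E2) := by
  intro nl1
  induction nl1 with
  | zero =>
    intro o E2 i nl2 hi hlen
    cases E2 with
    | nil =>
      simp at hlen
      subst hlen
      simp
    | cons hd E2' =>
      obtain ⟨s, l⟩ := hd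
      rw [mergeL_zero]
      have : nl2 + (0 - o) = nl2 := by omega
      rw [this]
      simp
  | succ n ih =>
    intro o E2 i nl2 hi hlen
    cases E2 with
    | nil =>
      simp at hlen
      subst hlen
      rw [mergeL_nil2, sub_idx_nil, sub_idx_nil]
      congr 1
      omega
    | cons hd E2' =>
      obtain ⟨s, l⟩ := hd
      rw [mergeL_m4, sub_idx_succ (by omega)]
      simp at hlen
      have e1 : i + (n + 1) - 1 = i + n := by omega
      have e2 : nl2 + (n + 1 - o) = nl2 + (n - (o - 1)) := by omega
      rw [e1, e2]
      exact ih (o - 1) E2' i nl2 hi (by omega)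

theorem I1lem : ∀ nl1 t l (E1' : List (Tm × Nat)) nl2 o E2, Good t → l ≤ nl1 →
    GoodL E2 → OrdL E2 → levL E2 ≤ nl2 → E2.length = o →
    sub t (nl2 + (nl1 - l - o)) (mergeL [] (nl1 - l) o E2)
      = sub (.idx 1) (nl2 + (nl1 - o)) (mergeL ((t, l) :: E1') nl1 o E2) := by
  intro nl1
  induction nl1 with
  | zero =>
    intro t l E1' nl2 o E2 hg hl hgE hoE hlev hlen
    have hl0 : l = 0 := by omega
    subst hl0
    cases E2 with
    | nil =>
      simp at hlen
      subst hlen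
      rw [mergeL_nil2, mergeL_nil2, sub_idx_one]
      simp
    | cons hd E2' =>
      obtain ⟨s, m⟩ := hd
      rw [mergeL_zero, mergeL_m6, sub_idx_one]
      have hsh := shift0 t ((s, m) :: E2') m (nl2 + (0 - o) - (m + (0 - o))) hg hgE hoE
        (by simp [levL])
      rw [hsh]
      congr 1
      simp [levL] at hlev
      omega
  | succ n ih =>
    intro t l E1' nl2 o E2 hg hl hgE hoE hlev hlen
    cases E2 with
    | nil =>
      simp at hlen
      subst hlen
      rw [mergeL_nil2, mergeL_nil2, sub_idx_one]
      congr 1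
      omega
    | cons hd E2' =>
      obtain ⟨s, m⟩ := hd
      by_cases hln : l = n + 1
      · subst hln
        have e0 : n + 1 - (n + 1) = 0 := by omega
        rw [e0, mergeL_zero, mergeL_m6, sub_idx_one]
        have hsh := shift0 t ((s, m) :: E2') m
          (nl2 + (n + 1 - o) - (m + (n + 1 - o))) hg hgE hoE (by simp [levL])
        rw [hsh]
        congr 1
        simp [levL] at hlev
        omega
      · have hls : l ≤ n := by omega
        have s1 : mergeL [] (n + 1 - l) o ((s, m) :: E2')
            = mergeL [] (n - l) (o - 1) E2' := by
          rw [mergeL_step (l1 := []) (by simp [levL]; omega)]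
          congr 1 <;> omega
        have s2 : mergeL ((t, l) :: E1') (n + 1) o ((s, m) :: E2')
            = mergeL ((t, l) :: E1') n (o - 1) E2' := by
          rw [mergeL_step (l1 := (t, l) :: E1') (by simp [levL]; omega)]
          congr 1 <;> omega
        rw [s1, s2]
        simp [levL] at hlev
        simp at hlen
        have ihh := ih t l E1' nl2 (o - 1) E2' hg hls (GoodL_cons.mp hgE).2 hoE.2
          (le_trans hoE.1 hlev) (by omega)
        have a1 : n + 1 - l - o = n - l - (o - 1) := by omega
        have a3 : n + 1 - o = n - (o - 1) := by omega
        rw [a1, a3]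
        exact ihh

theorem I2lem : ∀ nl1 i t l (E1' : List (Tm × Nat)) nl2 o E2, 2 ≤ i → l ≤ nl1 →
    levL E1' ≤ l → E2.length = o →
    sub (.idx (i - 1)) (nl2 + (nl1 - o)) (mergeL E1' nl1 o E2)
      = sub (.idx i) (nl2 + (nl1 - o)) (mergeL ((t, l) :: E1') nl1 o E2) := by
  intro nl1
  induction nl1 with
  | zero =>
    intro i t l E1' nl2 o E2 hi hl hlev hlen
    cases E2 with
    | nil =>
      simp at hlen
      subst hlen
      rw [mergeL_nil2, mergeL_nil2, sub_idx_succ (by omega)]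
    | cons hd E2' =>
      obtain ⟨s, m⟩ := hd
      have hl0 : l = 0 := by omega
      subst hl0
      rw [mergeL_m6, sub_idx_succ (by omega)]
  | succ n ih =>
    intro i t l E1' nl2 o E2 hi hl hlev hlen
    cases E2 with
    | nil =>
      simp at hlen
      subst hlen
      rw [mergeL_nil2, mergeL_nil2, sub_idx_succ (by omega)]
    | cons hd E2' =>
      obtain ⟨s, m⟩ := hd
      by_cases hln : l = n + 1
      · subst hln
        rw [mergeL_m6, sub_idx_succ (by omega)]
      · have s1 : mergeL E1' (n + 1) o ((s, m) :: E2') = mergeL E1' n (o - 1) E2' := by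
          rw [mergeL_step (l1 := E1') (by omega)]
          congr 1 <;> omega
        have s2 : mergeL ((t, l) :: E1') (n + 1) o ((s, m) :: E2')
            = mergeL ((t, l) :: E1') n (o - 1) E2' := by
          rw [mergeL_step (l1 := (t, l) :: E1') (by simp [levL]; omega)]
          congr 1 <;> omega
        rw [s1, s2]
        simp at hlen
        have a3 : n + 1 - o = n - (o - 1) := by omega
        rw [a3]
        exact ih i t l E1' nl2 (o - 1) E2' hi (by omega) hlev (by omega)

/-- The composition ("m1") lemma for the normalizer. -/
theorem comp : ∀ (a : Tm) (E1 : List (Tm × Nat)) nl1 nl2 o (E2 : List (Tm × Nat)),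
    Good a → GoodL E1 → OrdL E1 → levL E1 ≤ nl1 →
    GoodL E2 → OrdL E2 → levL E2 ≤ nl2 → E2.length = o →
    sub (sub a nl1 E1) nl2 E2 = sub a (nl2 + (nl1 - o)) (mergeL E1 nl1 o E2) := by
  intro a E1 nl1 nl2 o E2 hga hg1 ho1 hl1 hg2 ho2 hl2 hlen
  match a with
  | .const c => simp
  | .susp t o' n e => exact absurd hga (by simp [Good])
  | .app a b =>
    rw [sub_app, sub_app, sub_app]
    simp only [Good] at hga
    rw [comp a E1 nl1 nl2 o E2 hga.1 hg1 ho1 hl1 hg2 ho2 hl2 hlen,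
      comp b E1 nl1 nl2 o E2 hga.2 hg1 ho1 hl1 hg2 ho2 hl2 hlen]
  | .lam a =>
    rw [sub_lam, sub_lam, sub_lam]
    have ih := comp a ((.idx 1, nl1 + 1) :: E1) (nl1 + 1) (nl2 + 1) (o + 1)
      ((.idx 1, nl2 + 1) :: E2) hga
      (GoodL_cons.mpr ⟨by simp [Good], hg1⟩) ⟨le_trans hl1 (Nat.le_succ _), ho1⟩
      (by simp [levL])
      (GoodL_cons.mpr ⟨by simp [Good], hg2⟩) ⟨le_trans hl2 (Nat.le_succ _), ho2⟩
      (by simp [levL])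
      (by simp [hlen])
    rw [ih, mergeL_m6, sub_idx_one]
    have e1 : nl2 + 1 - (nl2 + 1) = 0 := by omega
    rw [e1, sub_idx_nil]
    rw [mergeL_step (lt_of_le_of_lt hl1 (Nat.lt_succ_self _))]
    have e2 : nl1 + 1 - 1 = nl1 := by omega
    have e3 : o + 1 - 1 = o := by omega
    have e4 : nl2 + 1 + (nl1 + 1 - (o + 1)) = nl2 + (nl1 - o) + 1 := by omega
    rw [e2, e3, e4]
  | .idx i =>
    match E1 with
    | [] =>
      rw [sub_idx_nil]
      have : levL ([] : List (Tm × Nat)) ≤ nl1 := by simp [levL]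
      exact Dlem nl1 o E2 i nl2 (by simpa [Good] using hga) hlen
    | (t, l) :: E1' =>
      simp only [levL] at hl1
      by_cases hione : i = 1
      · subst hione
        rw [sub_idx_one]
        rw [comp t [] (nl1 - l) nl2 o E2 ((GoodL_cons.mp hg1).1) GoodL_nil (by trivial)
          (by simp [levL]) hg2 ho2 hl2 hlen]
        exact I1lem nl1 t l E1' nl2 o E2 ((GoodL_cons.mp hg1).1) hl1 hg2 ho2 hl2 hlen
      · have hi2 : 2 ≤ i := by
          have : 1 ≤ i := by simpa [Good] using hga
          omega
        rw [sub_idx_succ hione]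
        rw [comp (.idx (i - 1)) E1' nl1 nl2 o E2 (by simp [Good]; omega)
          (GoodL_cons.mp hg1).2 ho1.2 (le_trans ho1.1 hl1) hg2 ho2 hl2 hlen]
        exact I2lem nl1 i t l E1' nl2 o E2 hi2 hl1 ho1.1 hlen
termination_by a E1 _ _ _ _ => S a + W E1
decreasing_by
  all_goals simp [S, W]
  all_goals try omega
  · have := S_pos t; omega
mutual
/-- Normalization of terms. -/
def evalT : Tm → Tm
  | .const c => .const c
  | .idx i => .idx i
  | .app a b => .app (evalT a) (evalT b)
  | .lam a => .lam (evalT a)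
  | .susp t _ nl e => sub (evalT t) nl (evalE e)
/-- Normalization of environments. -/
def evalE : Env → List (Tm × Nat)
  | .nil => []
  | .econs t l e => (evalT t, l) :: evalE e
  | .merge e1 n o e2 => mergeL (evalE e1) n o (evalE e2)
end

mutual
theorem evalT_wf : ∀ {t : Tm}, WfTm t → Good (evalT t)
  | _, .const c => by simp [evalT, Good]
  | _, .idx i h => by simpa [evalT, Good] using h
  | _, .app h1 h2 => by
    rw [evalT]
    exact ⟨evalT_wf h1, evalT_wf h2⟩
  | _, .lam h => by
    rw [evalT]
    exact evalT_wf h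
  | _, .susp ol nl ht he hlen hlev => by
    rw [evalT]
    exact subGood _ _ _ (evalT_wf ht) (evalE_wf he).1
theorem evalE_wf : ∀ {e : Env}, WfEnv e →
    GoodL (evalE e) ∧ OrdL (evalE e) ∧ levL (evalE e) ≤ Env.lev e ∧
      (evalE e).length = Env.len e
  | _, .nil => by simp [evalE, OrdL, levL, Env.lev, Env.len]
  | _, .econs l ht he hle => by
    obtain ⟨g, o, lv, ln⟩ := evalE_wf he
    rw [evalE]
    refine ⟨GoodL_cons.mpr ⟨evalT_wf ht, g⟩, ⟨le_trans lv hle, o⟩, ?_, ?_⟩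
    · simp [levL, Env.lev]
    · simp [Env.len]; omega
  | _, .merge (e1 := e1) (e2 := e2) nl1 ol2 h1 h2 hlev hlen => by
    obtain ⟨g1, o1, lv1, ln1⟩ := evalE_wf h1
    obtain ⟨g2, o2, lv2, ln2⟩ := evalE_wf h2
    rw [evalE]
    refine ⟨mergeL_good _ _ _ _ g1 g2, mergeL_ord _ _ _ _ o1 o2 (le_trans lv1 hlev) (by omega),
      ?_, ?_⟩
    · have := mergeL_lev (evalE e1) nl1 ol2 (evalE e2) o1 o2 (le_trans lv1 hlev) (by omega)
      simp [Env.lev]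
      omega
    · have := mergeL_len (evalE e1) nl1 ol2 (evalE e2) o1 (le_trans lv1 hlev)
      simp [Env.len]
      omega
end

theorem len_pres : ∀ {e e' : Env}, SRE e e' → Env.len e' = Env.len e
  | _, _, .m2 e1 nl1 => by simp [Env.len]
  | _, _, .m3 ol2 e2 => by simp [Env.len]
  | _, _, .m4 nl1 ol2 t l e2 h => by simp [Env.len]; omega
  | _, _, .m5 t n e1 nl1 ol2 s l e2 h => by simp [Env.len]; omega
  | _, _, .m6 t n e1 ol2 s l e2 => by simp [Env.len]; omega
  | _, _, .consT l e h => by simp [Env.len]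
  | _, _, .consE t l h => by simp [Env.len]; rw [len_pres h]
  | _, _, .mergeL nl1 ol2 e2 h => by simp [Env.len]; rw [len_pres h]
  | _, _, .mergeR e1 nl1 ol2 h => by simp [Env.len]; rw [len_pres h]

theorem lev_mono : ∀ {e e' : Env}, SRE e e' → WfEnv e → Env.lev e' ≤ Env.lev e
  | _, _, .m2 e1 nl1, hw => by
    cases hw with
    | merge _ _ h1 h2 hl hn => simpa [Env.lev] using hl
  | _, _, .m3 ol2 e2, _ => by simp [Env.lev]
  | _, _, .m4 nl1 ol2 t l e2 h, hw => by
    cases hw with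
    | merge _ _ h1 h2 hl hn =>
      cases h2 with
      | econs _ ht he hle =>
        simp [Env.lev, Env.len] at *
        omega
  | _, _, .m5 t n e1 nl1 ol2 s l e2 h, hw => by
    cases hw with
    | merge _ _ h1 h2 hl hn =>
      cases h2 with
      | econs _ ht he hle =>
        simp [Env.lev, Env.len] at *
        omega
  | _, _, .m6 t n e1 ol2 s l e2, _ => by simp [Env.lev]
  | _, _, .consT l e h, _ => by simp [Env.lev]
  | _, _, .consE t l h, _ => by simp [Env.lev]
  | _, _, .mergeL nl1 ol2 e2 h, _ => by simp [Env.lev]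
  | _, _, .mergeR e1 nl1 ol2 h, hw => by
    cases hw with
    | merge _ _ h1 h2 hl hn =>
      have := lev_mono h h2
      simp [Env.lev]
      omega

mutual
theorem srT_wf : ∀ {t t' : Tm}, SR t t' → WfTm t → WfTm t'
  | _, _, .r1 c ol nl e, _ => .const c
  | _, _, .r2 i nl h, _ => .idx _ (by omega)
  | _, _, .r3 ol nl t l e, hw => by
    cases hw with
    | susp _ _ ht he hlen hlev =>
      cases he with
      | econs _ ht' he' hle =>
        exact .susp 0 (nl - l) ht' .nil rfl (by simp [Env.lev])
  | _, _, .r4 i ol nl t l e hi, hw => by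
    cases hw with
    | susp _ _ ht he hlen hlev =>
      cases he with
      | econs _ ht' he' hle =>
        simp [Env.len] at hlen
        simp [Env.lev] at hlev
        exact .susp (ol - 1) nl (.idx _ (by omega)) he' (by omega) (by omega)
  | _, _, .r5 t1 t2 ol nl e, hw => by
    cases hw with
    | susp _ _ ht he hlen hlev =>
      cases ht with
      | app h1 h2 => exact .app (.susp ol nl h1 he hlen hlev) (.susp ol nl h2 he hlen hlev)
  | _, _, .r6 t ol nl e, hw => by
    cases hw with
    | susp _ _ ht he hlen hlev =>
      cases ht with
      | lam h1 =>
        refine .lam (.susp (ol + 1) (nl + 1) h1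
          (.econs (nl + 1) (.idx 1 (by omega)) he (by omega)) ?_ ?_)
        · simp [Env.len] at *; omega
        · simp [Env.lev]
  | _, _, .m1 t ol1 nl1 e1 ol2 nl2 e2, hw => by
    cases hw with
    | susp _ _ ht he hlen hlev =>
      cases ht with
      | susp _ _ ht1 he1 hlen1 hlev1 =>
        refine .susp _ _ ht1 (.merge nl1 ol2 he1 he hlev1 hlen) ?_ ?_
        · simp [Env.len]; omega
        · simp [Env.lev]; omega
  | _, _, .appL t2 h, hw => by
    cases hw with
    | app h1 h2 => exact .app (srT_wf h h1) h2
  | _, _, .appR t1 h, hw => by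
    cases hw with
    | app h1 h2 => exact .app h1 (srT_wf h h2)
  | _, _, .lamC h, hw => by
    cases hw with
    | lam h1 => exact .lam (srT_wf h h1)
  | _, _, .suspT ol nl e h, hw => by
    cases hw with
    | susp _ _ ht he hlen hlev => exact .susp ol nl (srT_wf h ht) he hlen hlev
  | _, _, .suspE t ol nl h, hw => by
    cases hw with
    | susp _ _ ht he hlen hlev =>
      exact .susp ol nl ht (srE_wf h he) (by rw [len_pres h]; exact hlen)
        (le_trans (lev_mono h he) hlev)
theorem srE_wf : ∀ {e e' : Env}, SRE e e' → WfEnv e → WfEnv e'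
  | _, _, .m2 e1 nl1, hw => by
    cases hw with
    | merge _ _ h1 h2 hl hn => exact h1
  | _, _, .m3 ol2 e2, hw => by
    cases hw with
    | merge _ _ h1 h2 hl hn => exact h2
  | _, _, .m4 nl1 ol2 t l e2 h, hw => by
    cases hw with
    | merge _ _ h1 h2 hl hn =>
      cases h2 with
      | econs _ ht he hle =>
        simp [Env.len] at hn
        exact .merge _ _ .nil he (by simp [Env.lev]) (by omega)
  | _, _, .m5 t n e1 nl1 ol2 s l e2 h, hw => by
    cases hw with
    | merge _ _ h1 h2 hl hn =>
      cases h2 with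
      | econs _ ht he hle =>
        simp [Env.len] at hn
        simp [Env.lev] at hl
        exact .merge _ _ h1 he (by simp [Env.lev]; omega) (by omega)
  | _, _, .m6 t n e1 ol2 s l e2, hw => by
    cases hw with
    | merge _ _ h1 h2 hl hn =>
      cases h1 with
      | econs _ ht1 he1 hle1 =>
        refine .econs _ (.susp ol2 l ht1 h2 hn (by simp [Env.lev])) (.merge _ _ he1 h2 ?_ hn) ?_
        · simpa [Env.lev] using hle1
        · simp [Env.lev]
  | _, _, .consT l e h, hw => by
    cases hw with
    | econs _ ht he hle => exact .econs l (srT_wf h ht) he hle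
  | _, _, .consE t l h, hw => by
    cases hw with
    | econs _ ht he hle => exact .econs l ht (srE_wf h he) (le_trans (lev_mono h he) hle)
  | _, _, .mergeL nl1 ol2 e2 h, hw => by
    cases hw with
    | merge _ _ h1 h2 hl hn =>
      exact .merge _ _ (srE_wf h h1) h2 (le_trans (lev_mono h h1) hl) hn
  | _, _, .mergeR e1 nl1 ol2 h, hw => by
    cases hw with
    | merge _ _ h1 h2 hl hn =>
      exact .merge _ _ h1 (srE_wf h h2) hl (by rw [len_pres h]; exact hn)
end
mutual
theorem evalT_inv : ∀ {t t' : Tm}, SR t t' → WfTm t → evalT t' = evalT t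
  | _, _, .r1 c ol nl e, _ => by simp [evalT]
  | _, _, .r2 i nl h, _ => by simp [evalT, evalE]
  | _, _, .r3 ol nl t l e, _ => by
    simp only [evalT, evalE]
    rw [sub_idx_one]
  | _, _, .r4 i ol nl t l e hi, _ => by
    simp only [evalT, evalE]
    rw [sub_idx_succ (by omega)]
  | _, _, .r5 t1 t2 ol nl e, _ => by
    simp only [evalT, evalE]
    rw [sub_app]
  | _, _, .r6 t ol nl e, _ => by
    simp only [evalT, evalE]
    rw [sub_lam]
  | _, _, .m1 t ol1 nl1 e1 ol2 nl2 e2, hw => by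
    cases hw with
    | susp _ _ ht he hlen hlev =>
      cases ht with
      | susp _ _ ht1 he1 hlen1 hlev1 =>
        simp only [evalT, evalE]
        obtain ⟨g1, o1, lv1, ln1⟩ := evalE_wf he1
        obtain ⟨g2, o2, lv2, ln2⟩ := evalE_wf he
        exact (comp (evalT t) (evalE e1) nl1 nl2 ol2 (evalE e2) (evalT_wf ht1) g1 o1
          (le_trans lv1 hlev1) g2 o2 (le_trans lv2 hlev) (by omega)).symm
  | _, _, .appL t2 h, hw => by
    cases hw with
    | app h1 h2 => simp only [evalT]; rw [evalT_inv h h1]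
  | _, _, .appR t1 h, hw => by
    cases hw with
    | app h1 h2 => simp only [evalT]; rw [evalT_inv h h2]
  | _, _, .lamC h, hw => by
    cases hw with
    | lam h1 => simp only [evalT]; rw [evalT_inv h h1]
  | _, _, .suspT ol nl e h, hw => by
    cases hw with
    | susp _ _ ht he hlen hlev => simp only [evalT]; rw [evalT_inv h ht]
  | _, _, .suspE t ol nl h, hw => by
    cases hw with
    | susp _ _ ht he hlen hlev => simp only [evalT]; rw [evalE_inv h he]
theorem evalE_inv : ∀ {e e' : Env}, SRE e e' → WfEnv e → evalE e' = evalE e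
  | _, _, .m2 e1 nl1, _ => by simp [evalE]
  | _, _, .m3 ol2 e2, _ => by
    simp only [evalE]
    cases he2 : evalE e2 with
    | nil => simp
    | cons hd L =>
      obtain ⟨s, l⟩ := hd
      rw [mergeL_zero]
  | _, _, .m4 nl1 ol2 t l e2 h, _ => by
    simp only [evalE]
    cases nl1 with
    | zero => omega
    | succ k =>
      rw [mergeL_m4]
      simp
  | _, _, .m5 t n e1 nl1 ol2 s l e2 h, _ => by
    simp only [evalE]
    rw [mergeL_m5 (by omega)]
  | _, _, .m6 t n e1 ol2 s l e2, _ => by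
    simp only [evalT, evalE]
    rw [mergeL_m6]
  | _, _, .consT l e h, hw => by
    cases hw with
    | econs _ ht he hle => simp only [evalE]; rw [evalT_inv h ht]
  | _, _, .consE t l h, hw => by
    cases hw with
    | econs _ ht he hle => simp only [evalE]; rw [evalE_inv h he]
  | _, _, .mergeL nl1 ol2 e2 h, hw => by
    cases hw with
    | merge _ _ h1 h2 hl hn => simp only [evalE]; rw [evalE_inv h h1]
  | _, _, .mergeR e1 nl1 ol2 h, hw => by
    cases hw with
    | merge _ _ h1 h2 hl hn => simp only [evalE]; rw [evalE_inv h h2]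
end
open Relation in
theorem rtg_appL (t2 : Tm) {t1 t1' : Tm} (h : ReflTransGen SR t1 t1') :
    ReflTransGen SR (.app t1 t2) (.app t1' t2) :=
  ReflTransGen.lift (fun x => Tm.app x t2) (fun _ _ hh => SR.appL t2 hh) _ _ h
open Relation in
theorem rtg_appR (t1 : Tm) {t2 t2' : Tm} (h : ReflTransGen SR t2 t2') :
    ReflTransGen SR (.app t1 t2) (.app t1 t2') :=
  ReflTransGen.lift (fun x => Tm.app t1 x) (fun _ _ hh => SR.appR t1 hh) _ _ h
open Relation in
theorem rtg_lamC {t t' : Tm} (h : ReflTransGen SR t t') :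
    ReflTransGen SR (.lam t) (.lam t') :=
  ReflTransGen.lift (fun x => Tm.lam x) (fun _ _ hh => SR.lamC hh) _ _ h
open Relation in
theorem rtg_suspT (ol nl : Nat) (e : Env) {t t' : Tm} (h : ReflTransGen SR t t') :
    ReflTransGen SR (.susp t ol nl e) (.susp t' ol nl e) :=
  ReflTransGen.lift (fun x => Tm.susp x ol nl e) (fun _ _ hh => SR.suspT ol nl e hh) _ _ h
open Relation in
theorem rtg_suspE (t : Tm) (ol nl : Nat) {e e' : Env} (h : ReflTransGen SRE e e') :
    ReflTransGen SR (.susp t ol nl e) (.susp t ol nl e') :=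
  ReflTransGen.lift (r := SRE) (fun x => Tm.susp t ol nl x) (fun _ _ hh => SR.suspE t ol nl hh) _ _ h
open Relation in
theorem rtg_consT (l : Nat) (e : Env) {t t' : Tm} (h : ReflTransGen SR t t') :
    ReflTransGen SRE (.econs t l e) (.econs t' l e) :=
  ReflTransGen.lift (r := SR) (fun x => Env.econs x l e) (fun _ _ hh => SRE.consT l e hh) _ _ h
open Relation in
theorem rtg_consE (t : Tm) (l : Nat) {e e' : Env} (h : ReflTransGen SRE e e') :
    ReflTransGen SRE (.econs t l e) (.econs t l e') :=
  ReflTransGen.lift (fun x => Env.econs t l x) (fun _ _ hh => SRE.consE t l hh) _ _ h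
open Relation in
theorem rtg_mergeL (nl1 ol2 : Nat) (e2 : Env) {e1 e1' : Env} (h : ReflTransGen SRE e1 e1') :
    ReflTransGen SRE (.merge e1 nl1 ol2 e2) (.merge e1' nl1 ol2 e2) :=
  ReflTransGen.lift (fun x => Env.merge x nl1 ol2 e2) (fun _ _ hh => SRE.mergeL nl1 ol2 e2 hh) _ _ h
open Relation in
theorem rtg_mergeR (e1 : Env) (nl1 ol2 : Nat) {e2 e2' : Env} (h : ReflTransGen SRE e2 e2') :
    ReflTransGen SRE (.merge e1 nl1 ol2 e2) (.merge e1 nl1 ol2 e2') :=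
  ReflTransGen.lift (fun x => Env.merge e1 nl1 ol2 x) (fun _ _ hh => SRE.mergeR e1 nl1 ol2 hh) _ _ h

/-- Embedding of list environments back into environments. -/
def embed : List (Tm × Nat) → Env
  | [] => .nil
  | (t, l) :: L => .econs t l (embed L)

/-- A suspension over a (pure, embedded) environment rewrites to its substitution. -/
theorem subred : ∀ (a : Tm) (nl : Nat) (L : List (Tm × Nat)), Good a → GoodL L →
    Relation.ReflTransGen SR (.susp a L.length nl (embed L)) (sub a nl L) := by
  intro a nl L hg hgL
  match a with
  | .const c =>
    rw [sub_const]
    exact .single (.r1 c _ nl _)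
  | .susp t o n e => exact absurd hg (by simp [Good])
  | .idx i =>
    match L with
    | [] =>
      rw [sub_idx_nil]
      exact .single (.r2 i nl (by simpa [Good] using hg))
    | (t, l) :: L' =>
      by_cases hi : i = 1
      · subst hi
        rw [sub_idx_one]
        exact .head (.r3 _ nl t l (embed L'))
          (subred t (nl - l) [] ((GoodL_cons.mp hgL).1) GoodL_nil)
      · have h1i : 1 ≤ i := by simpa [Good] using hg
        rw [sub_idx_succ hi]
        exact .head (.r4 i _ nl t l (embed L') (by omega))
          (subred (.idx (i - 1)) nl L' (by simp [Good]; omega) ((GoodL_cons.mp hgL).2))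
  | .app a b =>
    rw [sub_app]
    simp only [Good] at hg
    exact .head (.r5 a b _ nl (embed L))
      ((rtg_appL _ (subred a nl L hg.1 hgL)).trans (rtg_appR _ (subred b nl L hg.2 hgL)))
  | .lam a =>
    rw [sub_lam]
    exact .head (.r6 a _ nl (embed L))
      (rtg_lamC (subred a (nl + 1) ((.idx 1, nl + 1) :: L) hg
        (GoodL_cons.mpr ⟨by simp [Good], hgL⟩)))
termination_by a _ L => S a + W L
decreasing_by
  all_goals simp [S, W]
  all_goals first
    | omega
    | (have := S_pos t; omega)

/-- A merge of embedded environments rewrites to the merged environment. -/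
theorem mergered : ∀ (L1 : List (Tm × Nat)) (nl1 o : Nat) (L2 : List (Tm × Nat)),
    GoodL L1 → GoodL L2 → OrdL L1 → OrdL L2 → levL L1 ≤ nl1 → L2.length = o →
    Relation.ReflTransGen SRE (.merge (embed L1) nl1 o (embed L2))
      (embed (mergeL L1 nl1 o L2)) := by
  intro L1 nl1 o L2 hg1 hg2 ho1 ho2 hl1 hlen
  match L2 with
  | [] =>
    simp only [List.length_nil] at hlen
    subst hlen
    rw [mergeL_nil2]
    exact .single (.m2 (embed L1) nl1)
  | (s, l) :: L2' =>
    match L1 with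
    | [] =>
      match nl1 with
      | 0 =>
        rw [mergeL_zero]
        exact .single (.m3 o _)
      | k + 1 =>
        rw [mergeL_m4]
        exact .head (.m4 (k + 1) o s l (embed L2') (by omega))
          (mergered [] k (o - 1) L2' hg1 (GoodL_cons.mp hg2).2 ho1 ho2.2 (by simp [levL])
            (by simp at hlen; omega))
    | (t, n) :: L1' =>
      by_cases hn : n = nl1
      · subst hn
        subst hlen
        rw [mergeL_m6]
        refine .head (.m6 t n (embed L1') _ s l (embed L2')) ?_
        refine .trans (rtg_consT _ _ (subred t l ((s, l) :: L2') ((GoodL_cons.mp hg1).1) hg2))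
          (rtg_consE _ _ ?_)
        exact mergered L1' n _ ((s, l) :: L2') ((GoodL_cons.mp hg1).2) hg2 ho1.2 ho2
          (le_trans ho1.1 hl1) rfl
      · have hlt : n < nl1 := by
          simp [levL] at hl1
          omega
        rw [mergeL_m5 hn]
        refine .head (.m5 t n (embed L1') nl1 o s l (embed L2') hlt) ?_
        exact mergered ((t, n) :: L1') (nl1 - 1) (o - 1) L2' hg1 ((GoodL_cons.mp hg2).2)
          ho1 ho2.2 (by simp [levL]; omega) (by simp at hlen; omega)
termination_by L1 _ _ L2 => L1.length + L2.length
decreasing_by all_goals (simp; try omega)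

mutual
theorem redT : ∀ {t : Tm}, WfTm t → Relation.ReflTransGen SR t (evalT t)
  | _, .const c => by rw [evalT]
  | _, .idx i h => by rw [evalT]
  | _, .app h1 h2 => by
    rw [evalT]
    exact (rtg_appL _ (redT h1)).trans (rtg_appR _ (redT h2))
  | _, .lam h => by
    rw [evalT]
    exact rtg_lamC (redT h)
  | _, .susp (t := t) (e := e) ol nl ht he hlen hlev => by
    rw [evalT]
    have hL : (evalE e).length = ol := by
      rw [(evalE_wf he).2.2.2]
      exact hlen
    refine .trans (rtg_suspT ol nl e (redT ht)) (.trans (rtg_suspE (evalT t) ol nl (redE he)) ?_)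
    rw [← hL]
    exact subred (evalT t) nl (evalE e) (evalT_wf ht) (evalE_wf he).1
theorem redE : ∀ {e : Env}, WfEnv e → Relation.ReflTransGen SRE e (embed (evalE e))
  | _, .nil => by rw [evalE]; exact .refl
  | _, .econs l ht he hle => by
    rw [evalE]
    exact (rtg_consT _ _ (redT ht)).trans (rtg_consE _ _ (redE he))
  | _, .merge (e1 := e1) (e2 := e2) nl1 ol2 h1 h2 hlev hlen => by
    rw [evalE]
    refine .trans (rtg_mergeL nl1 ol2 e2 (redE h1))
      (.trans (rtg_mergeR (embed (evalE e1)) nl1 ol2 (redE h2)) ?_)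
    obtain ⟨g1, o1, lv1, ln1⟩ := evalE_wf h1
    obtain ⟨g2, o2, lv2, ln2⟩ := evalE_wf h2
    exact mergered (evalE e1) nl1 ol2 (evalE e2) g1 g2 o1 o2 (le_trans lv1 hlev) (by omega)
end
/-- local confluence of the substitution subcalculus: one-step
reading/merging divergences from a well-formed expression can be joined. -/
theorem rm_locally_confluent :
    (∀ s u v : Tm, WfTm s → SR s u → SR s v →
        ∃ t, Relation.ReflTransGen SR u t ∧ Relation.ReflTransGen SR v t) ∧
    (∀ s u v : Env, WfEnv s → SRE s u → SRE s v →
        ∃ t, Relation.ReflTransGen SRE u t ∧ Relation.ReflTransGen SRE v t) := by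
  constructor
  · intro s u v hw hu hv
    refine ⟨evalT s, ?_, ?_⟩
    · rw [← evalT_inv hu hw]
      exact redT (srT_wf hu hw)
    · rw [← evalT_inv hv hw]
      exact redT (srT_wf hv hw)
  · intro s u v hw hu hv
    refine ⟨embed (evalE s), ?_, ?_⟩
    · rw [← evalE_inv hu hw]
      exact redE (srE_wf hu hw)
    · rw [← evalE_inv hv hw]
      exact redE (srE_wf hv hw)
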